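/- Let s : [1, ∞) → ℂ be locally integrable and slowly oscillating with respect to (L,1) summability: for every ε > 0 there exist t₀ > 1 and λ > 1 such that |s(u) − s(t)| ≤ ε whenever t₀ ≤ t < u ≤ t^λ. If τ(t) := (1/log t) ∫₁ᵗ s(u)/u du → A as t → ∞, then s(t) → A as t → ∞. -/

import Mathlib

open Filter MeasureTheory Set

theorem corollary2
    (s : ℝ → ℂ) (hs : ∀ t : ℝ, IntegrableOn s (Icc 1 t)) (A : ℂ)
    (hso : ∀ ε > (0:ℝ), ∃ t₀ > (1:ℝ), ∃ l > (1:ℝ),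
      ∀ t u : ℝ, t₀ ≤ t → t < u → u ≤ t ^ l → ‖s u - s t‖ ≤ ε)
    (hL1 : Tendsto (fun t : ℝ =>
        ((Real.log t : ℂ))⁻¹ * ∫ u in Ioc (1:ℝ) t, s u / (u : ℂ))
      atTop (nhds A)) :
    Tendsto s atTop (nhds A) := by
  -- integrability of u ↦ s u / u on Ioc a b for a ≥ 1
  have hint : ∀ a b : ℝ, 1 ≤ a → IntegrableOn (fun u => s u / (u : ℂ)) (Ioc a b) := by
    intro a b ha
    have hsub : Ioc a b ⊆ Icc 1 b := fun u hu => ⟨le_of_lt (lt_of_le_of_lt ha hu.1), hu.2⟩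
    refine IntegrableOn.mono_set ?_ hsub
    have hmeas : AEStronglyMeasurable (fun u : ℝ => ((u : ℂ))⁻¹)
        (volume.restrict (Icc (1:ℝ) b)) :=
      (Complex.measurable_ofReal.inv).aestronglyMeasurable
    have hbd : ∀ᵐ u : ℝ ∂(volume.restrict (Icc (1:ℝ) b)), ‖((u : ℂ))⁻¹‖ ≤ 1 := by
      refine (ae_restrict_iff' (measurableSet_Icc : MeasurableSet (Icc (1:ℝ) b))).2 (ae_of_all _ ?_)
      intro u hu
      rw [norm_inv, Complex.norm_real, Real.norm_eq_abs, abs_of_pos (by linarith [hu.1])]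
      exact inv_le_one_of_one_le₀ hu.1
    have h2 : IntegrableOn (fun u : ℝ => ((u : ℂ))⁻¹ * s u) (Icc 1 b) :=
      Integrable.bdd_mul (hs b) hmeas hbd
    refine h2.congr_fun (fun u _ => ?_) measurableSet_Icc
    rw [div_eq_mul_inv, mul_comm]
  have key : ∀ ε > (0:ℝ), ∀ᶠ t in atTop, ‖s t - A‖ < ε := by
    intro ε hε
    obtain ⟨t₀, ht₀, l, hl, hosc⟩ := hso (ε/3) (by linarith)
    set τ : ℝ → ℂ := fun t => ((Real.log t : ℂ))⁻¹ * ∫ u in Ioc (1:ℝ) t, s u / (u : ℂ) with hτ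
    have hl1ne : ((l:ℂ) - 1) ≠ 0 := by
      rw [sub_ne_zero]
      exact_mod_cast (by linarith : l ≠ 1)
    have hlne : (l:ℂ) ≠ 0 := by exact_mod_cast (by linarith : l ≠ 0)
    have hg : Tendsto (fun t => ((l:ℂ) * τ (t ^ l) - τ t) / ((l:ℂ) - 1)) atTop (nhds A) := by
      have h1 : Tendsto (fun t => τ (t ^ l)) atTop (nhds A) :=
        hL1.comp (tendsto_rpow_atTop (by linarith))
      have h2 := ((h1.const_mul ((l:ℂ))).sub hL1).div_const ((l:ℂ) - 1)
      have heq : ((l:ℂ) * A - A) / ((l:ℂ) - 1) = A := by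
        field_simp
      rwa [heq] at h2
    have hbound : ∀ t : ℝ, t₀ ≤ t →
        ‖s t - ((l:ℂ) * τ (t ^ l) - τ t) / ((l:ℂ) - 1)‖ ≤ ε/3 := by
      intro t ht
      have ht1 : 1 < t := lt_of_lt_of_le ht₀ ht
      have ht0 : 0 < t := by linarith
      have hT : t < t ^ l := by
        nth_rewrite 1 [← Real.rpow_one t]
        exact Real.rpow_lt_rpow_of_exponent_lt ht1 hl
      have hT0 : 0 < t ^ l := Real.rpow_pos_of_pos ht0 l
      have hlogt : 0 < Real.log t := Real.log_pos ht1
      have hlogT : Real.log (t ^ l) = l * Real.log t := Real.log_rpow ht0 l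
      have hc : 0 < (l - 1) * Real.log t := mul_pos (by linarith) hlogt
      set c : ℂ := (((l - 1) * Real.log t : ℝ) : ℂ) with hcdef
      have hcne : c ≠ 0 := by
        simp only [hcdef, Complex.ofReal_ne_zero]
        exact hc.ne'
      have hlogne : (Real.log t : ℂ) ≠ 0 := by
        exact_mod_cast hlogt.ne'
      have hi1 : IntegrableOn (fun u => s u / (u : ℂ)) (Ioc (1:ℝ) t) := hint 1 t le_rfl
      have hi2 : IntegrableOn (fun u => s u / (u : ℂ)) (Ioc t (t ^ l)) := hint t (t^l) ht1.le
      have hsplit : (∫ u in Ioc (1:ℝ) (t ^ l), s u / (u : ℂ))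
          = (∫ u in Ioc (1:ℝ) t, s u / (u : ℂ)) + ∫ u in Ioc t (t ^ l), s u / (u : ℂ) := by
        rw [← setIntegral_union (Ioc_disjoint_Ioc_of_le le_rfl) measurableSet_Ioc hi1 hi2,
          Ioc_union_Ioc_eq_Ioc ht1.le hT.le]
      -- inverse is integrable on Ioc t (t^l)
      have hinvR : IntegrableOn (fun u : ℝ => u⁻¹) (Ioc t (t ^ l)) := by
        refine (ContinuousOn.integrableOn_Icc ?_).mono_set Ioc_subset_Icc_self
        exact continuousOn_inv₀.mono (fun u hu => by
          simp only [mem_compl_iff, mem_singleton_iff]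
          intro h; rw [h] at hu; exact absurd hu.1 (by linarith))
      have hinvC : IntegrableOn (fun u : ℝ => ((u : ℂ))⁻¹) (Ioc t (t ^ l)) := by
        have : (fun u : ℝ => ((u : ℂ))⁻¹) = fun u : ℝ => ((u⁻¹ : ℝ) : ℂ) := by
          funext u; push_cast; ring
        rw [this]
        exact hinvR.ofReal
      -- ∫ of 1/u over Ioc t (t^l)
      have hIinv : (∫ u in Ioc t (t ^ l), (u : ℝ)⁻¹) = (l - 1) * Real.log t := by
        rw [← intervalIntegral.integral_of_le hT.le, integral_inv_of_pos ht0 hT0,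
          Real.log_div hT0.ne' ht0.ne', hlogT]
        ring
      have hIinvC : (∫ u in Ioc t (t ^ l), ((u : ℂ))⁻¹) = c := by
        have h1 : (fun u : ℝ => ((u : ℂ))⁻¹) = fun u : ℝ => ((u⁻¹ : ℝ) : ℂ) :=
          funext fun u => (Complex.ofReal_inv u).symm
        rw [h1, hcdef, ← hIinv]
        exact integral_ofReal
      -- constant integral
      have hconst : (∫ u in Ioc t (t ^ l), s t / (u : ℂ)) = c * s t := by
        simp_rw [div_eq_mul_inv]
        rw [integral_const_mul, hIinvC, mul_comm]
      have hi3 : IntegrableOn (fun u : ℝ => s t / (u : ℂ)) (Ioc t (t ^ l)) := by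
        simp_rw [div_eq_mul_inv]
        exact hinvC.const_mul (s t)
      -- identify g t
      have hgt : ((l:ℂ) * τ (t ^ l) - τ t) / ((l:ℂ) - 1)
          = c⁻¹ * ∫ u in Ioc t (t ^ l), s u / (u : ℂ) := by
        simp only [hτ, hlogT, hsplit, hcdef]
        push_cast
        field_simp
        ring
      have hdiff : s t - ((l:ℂ) * τ (t ^ l) - τ t) / ((l:ℂ) - 1)
          = c⁻¹ * ∫ u in Ioc t (t ^ l), (s t - s u) / (u : ℂ) := by
        rw [hgt]
        have : (∫ u in Ioc t (t ^ l), (s t - s u) / (u : ℂ))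
            = (∫ u in Ioc t (t ^ l), s t / (u : ℂ)) - ∫ u in Ioc t (t ^ l), s u / (u : ℂ) := by
          rw [← integral_sub hi3 hi2]
          congr 1; funext u; rw [sub_div]
        rw [this, hconst, mul_sub, ← mul_assoc, inv_mul_cancel₀ hcne, one_mul]
      rw [hdiff]
      have hnormc : ‖c⁻¹‖ = ((l - 1) * Real.log t)⁻¹ := by
        rw [norm_inv, hcdef, Complex.norm_real, Real.norm_eq_abs, abs_of_pos hc]
      rw [norm_mul, hnormc]
      have hnormint : ‖∫ u in Ioc t (t ^ l), (s t - s u) / (u : ℂ)‖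
          ≤ ∫ u in Ioc t (t ^ l), (ε/3) * u⁻¹ := by
        refine norm_integral_le_of_norm_le (hinvR.const_mul (ε/3)) ?_
        refine (ae_restrict_iff' measurableSet_Ioc).2 (ae_of_all _ ?_)
        intro u hu
        have hu0 : 0 < u := by linarith [hu.1]
        rw [norm_div, Complex.norm_real, Real.norm_eq_abs, abs_of_pos hu0,
          div_eq_mul_inv, norm_sub_rev]
        have := hosc t u ht hu.1 hu.2
        exact mul_le_mul_of_nonneg_right this (by positivity)
      have hIb : (∫ u in Ioc t (t ^ l), (ε/3) * u⁻¹) = (ε/3) * ((l - 1) * Real.log t) := by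
        rw [integral_const_mul, hIinv]
      rw [hIb] at hnormint
      calc ((l - 1) * Real.log t)⁻¹ * ‖∫ u in Ioc t (t ^ l), (s t - s u) / (u : ℂ)‖
          ≤ ((l - 1) * Real.log t)⁻¹ * ((ε/3) * ((l - 1) * Real.log t)) := by
            exact mul_le_mul_of_nonneg_left hnormint (by positivity)
        _ = ε/3 := by field_simp; exact div_self (sub_ne_zero.2 (ne_of_gt hl))
    -- combine
    have hgA : ∀ᶠ t in atTop, ‖((l:ℂ) * τ (t ^ l) - τ t) / ((l:ℂ) - 1) - A‖ < ε/3 := by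
      have := Metric.tendsto_nhds.1 hg (ε/3) (by linarith)
      filter_upwards [this] with t ht
      rwa [Complex.dist_eq] at ht
    filter_upwards [hgA, eventually_ge_atTop t₀] with t h1 h2
    calc ‖s t - A‖ ≤ ‖s t - ((l:ℂ) * τ (t ^ l) - τ t) / ((l:ℂ) - 1)‖
          + ‖((l:ℂ) * τ (t ^ l) - τ t) / ((l:ℂ) - 1) - A‖ := by
            have := norm_sub_le_norm_sub_add_norm_sub (s t)
              (((l:ℂ) * τ (t ^ l) - τ t) / ((l:ℂ) - 1)) A
            exact this
      _ < ε/3 + ε/3 := by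
            exact add_lt_add_of_le_of_lt (hbound t h2) h1
      _ < ε := by linarith
  rw [Metric.tendsto_nhds]
  intro ε hε
  filter_upwards [key ε hε] with t ht
  rwa [Complex.dist_eq]
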